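/- For every x ∈ ℝ^d, W2²(x) ≥ (1/N) · (max(‖x‖_∞ − ‖x̃‖_∞, 0))², where ‖·‖_∞ denotes the maximum absolute value of the entries of a vector. -/

import Mathlib

open scoped BigOperators
open MeasureTheory

/-- The patch operator: extract coordinates along an index map. -/
noncomputable def patch {d s : ℕ} (ι : Fin s → Fin d) (x : EuclideanSpace ℝ (Fin d)) :
    EuclideanSpace ℝ (Fin s) :=
  WithLp.toLp 2 (fun l => x (ι l))

/-- The set of couplings between the uniform measures on `Fin N` and `Fin Nt`. -/
def couplings (N Nt : ℕ) : Set (Matrix (Fin N) (Fin Nt) ℝ) :=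
  {π | (∀ j k, 0 ≤ π j k) ∧ (∀ k, ∑ j, π j k = 1 / (Nt : ℝ)) ∧
    (∀ j, ∑ k, π j k = 1 / (N : ℝ))}

/-- Squared Wasserstein-2 distance between the empirical patch distribution of `x`
and that of the reference image `xt`. -/
noncomputable def W2sq {d dt s N Nt : ℕ} (ι : Fin N → Fin s → Fin d)
    (ιt : Fin Nt → Fin s → Fin dt) (xt : EuclideanSpace ℝ (Fin dt))
    (x : EuclideanSpace ℝ (Fin d)) : ℝ :=
  sInf ((fun π : Matrix (Fin N) (Fin Nt) ℝ =>
    ∑ j, ∑ k, ‖patch (ι j) x - patch (ιt k) xt‖ ^ 2 * π j k) '' couplings N Nt)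

/-- The maximum absolute value of the entries of a vector (`‖·‖_∞`). -/
noncomputable def supNorm {d : ℕ} (hd : 0 < d) (x : EuclideanSpace ℝ (Fin d)) : ℝ :=
  (Finset.univ : Finset (Fin d)).sup' (Finset.univ_nonempty_iff.mpr ⟨⟨0, hd⟩⟩)
    fun i => |x i|

/-- If the patches cover every coordinate, then
`W2²(x) ≥ (1/N) · (max(‖x‖_∞ − ‖x̃‖_∞, 0))²`. -/
theorem W2sq_ge_supNorm_bound (d dt s N Nt : ℕ)
    (hd : 0 < d) (hdt : 0 < dt) (hs : 0 < s) (hN : 0 < N) (hNt : 0 < Nt)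
    (ι : Fin N → Fin s → Fin d) (hι : ∀ j, Function.Injective (ι j))
    (ιt : Fin Nt → Fin s → Fin dt) (hιt : ∀ k, Function.Injective (ιt k))
    (xt : EuclideanSpace ℝ (Fin dt))
    (hcover : ∀ i : Fin d, ∃ j l, ι j l = i)
    (x : EuclideanSpace ℝ (Fin d)) :
    (1 / (N : ℝ)) * max (supNorm hd x - supNorm hdt xt) 0 ^ 2 ≤ W2sq ι ιt xt x := by
  classical
  set M := max (supNorm hd x - supNorm hdt xt) 0 with hMdef
  have hM0 : 0 ≤ M := le_max_right _ _
  obtain ⟨i₀, -, hi₀⟩ := Finset.exists_mem_eq_sup' (Finset.univ_nonempty_iff.mpr ⟨⟨0, hd⟩⟩)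
    (fun i : Fin d => |x i|)
  obtain ⟨j₀, l₀, hjl⟩ := hcover i₀
  -- key pointwise bound
  have key : ∀ k : Fin Nt, M ^ 2 ≤ ‖patch (ι j₀) x - patch (ιt k) xt‖ ^ 2 := by
    intro k
    have habs : M ≤ |x i₀ - xt (ιt k l₀)| := by
      apply max_le _ (abs_nonneg _)
      have h1 : supNorm hd x = |x i₀| := hi₀
      have h2 : |xt (ιt k l₀)| ≤ supNorm hdt xt :=
        Finset.le_sup' (fun i => |xt i|) (Finset.mem_univ _)
      calc supNorm hd x - supNorm hdt xt ≤ |x i₀| - |xt (ιt k l₀)| := by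
            rw [h1]; linarith
        _ ≤ |x i₀ - xt (ιt k l₀)| := abs_sub_abs_le_abs_sub _ _
    have hsq : M ^ 2 ≤ (x i₀ - xt (ιt k l₀)) ^ 2 := by
      have := pow_le_pow_left₀ hM0 habs 2
      simpa [sq_abs] using this
    refine hsq.trans ?_
    have hnorm : ‖patch (ι j₀) x - patch (ιt k) xt‖ ^ 2
        = ∑ l, (x (ι j₀ l) - xt (ιt k l)) ^ 2 := by
      rw [EuclideanSpace.norm_eq, Real.sq_sqrt (by positivity)]
      refine Finset.sum_congr rfl fun l _ => ?_
      simp [patch, sq_abs]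
    rw [hnorm]
    have := Finset.single_le_sum (f := fun l => (x (ι j₀ l) - xt (ιt k l)) ^ 2)
      (fun l _ => by positivity) (Finset.mem_univ l₀)
    rw [← hjl]; simpa using this
  -- the infimum bound
  unfold W2sq
  apply le_csInf
  · refine ⟨_, ⟨fun _ _ => 1 / (N * Nt : ℝ), ⟨fun _ _ => by positivity, fun k => ?_, fun j => ?_⟩, rfl⟩⟩
    · simp only [Finset.sum_const, Finset.card_univ, Fintype.card_fin, nsmul_eq_mul]
      field_simp
    · simp only [Finset.sum_const, Finset.card_univ, Fintype.card_fin, nsmul_eq_mul]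
      field_simp
  · rintro b ⟨π, ⟨hpos, hcol, hrow⟩, rfl⟩
    have step1 : ∑ k, ‖patch (ι j₀) x - patch (ιt k) xt‖ ^ 2 * π j₀ k
        ≤ ∑ j, ∑ k, ‖patch (ι j) x - patch (ιt k) xt‖ ^ 2 * π j k :=
      Finset.single_le_sum (f := fun j => ∑ k, ‖patch (ι j) x - patch (ιt k) xt‖ ^ 2 * π j k)
        (fun j _ => Finset.sum_nonneg fun k _ => mul_nonneg (by positivity) (hpos j k))
        (Finset.mem_univ j₀)
    refine le_trans ?_ step1
    calc (1 / (N : ℝ)) * M ^ 2 = ∑ k, M ^ 2 * π j₀ k := by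
          rw [← Finset.mul_sum, hrow j₀]; ring
      _ ≤ ∑ k, ‖patch (ι j₀) x - patch (ιt k) xt‖ ^ 2 * π j₀ k :=
          Finset.sum_le_sum fun k _ => mul_le_mul_of_nonneg_right (key k) (hpos j₀ k)
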